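/- arXiv:1904.13190 — 3 statements merged into one kernel-verified Lean document; each statement's English description precedes it below -/
import Mathlib

section
/- Let π_i : H → A_i (i ∈ I) be a jointly inner faithful family of Hopf algebra morphisms, i.e. the intersection over all words i ∈ L_I of the kernels of the maps π_i = (π_{i_1} ⊗ ⋯ ⊗ π_{i_k}) ∘ Δ^{(k)} (with antipode twists on starred letters) is zero. Then for every finite linearly independent subset F ⊂ H there exists a single word i ∈ L_I such that π_i(F) ⊂ A_i is linearly independent. -/
open TensorProduct

section Word

variable {k : Type} [Field k] {I : Type} {H : Type} [Ring H] [HopfAlgebra k H]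
variable (k) (A : I → Type) [∀ i, Ring (A i)] [∀ i, HopfAlgebra k (A i)]

/-- Underlying letter of a letter or its formal adjoint. -/
def letterIndex : I ⊕ I → I := Sum.elim id id

/-- The codomain `A_{i_1} ⊗ ⋯ ⊗ A_{i_k}` (right-nested, terminated by `k`; as a vector
space, so that `A_{i*} = A_i^{op}` has the same underlying space as `A_i`)
attached to a word in letters from `I` and their formal adjoints. -/
noncomputable def wordSpace : List (I ⊕ I) → ModuleCat k
  | [] => ModuleCat.of k k
  | a :: w => ModuleCat.of k (TensorProduct k (A (letterIndex a)) (wordSpace w))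

variable {A} {k}

/-- The map attached to a single letter: `π_i` for a plain letter `i`, and
`π_i ∘ S` (valued in `A_i^{op}`, which has the same underlying vector space) for
the formal adjoint `i*`. -/
noncomputable def letterMap (π : ∀ i, H →ₐc[k] A i) (a : I ⊕ I) : H →ₗ[k] A (letterIndex a) :=
  match a with
  | Sum.inl i => (π i).toLinearMap
  | Sum.inr i => (π i).toLinearMap ∘ₗ HopfAlgebra.antipode (R := k)

/-- The word map `π_𝐢 = (π_{i_1} ⊗ ⋯ ⊗ π_{i_k}) ∘ Δ^{(k)}` (with antipode twists on
starred letters), built by iterated comultiplication. -/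
noncomputable def wordMap (π : ∀ i, H →ₐc[k] A i) :
    ∀ w : List (I ⊕ I), H →ₗ[k] wordSpace k A w
  | [] => Coalgebra.counit
  | a :: w => TensorProduct.map (letterMap π a) (wordMap π w) ∘ₗ Coalgebra.comul

end Word

section Aux

/-- The counit is invariant under the antipode. -/
lemma counit_antipode' {R B : Type*} [CommRing R] [Ring B] [HopfAlgebra R B] (a : B) :
    Coalgebra.counit (R := R) (HopfAlgebra.antipode (R := R) a) = Coalgebra.counit (R := R) a := by
  obtain ⟨s, l, rt, heq⟩ := Coalgebra.Repr.arbitrary R a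
  have h1 : ∑ i ∈ s, Coalgebra.counit (R := R) (rt i) • l i = a := by
    have := congrArg (fun t => TensorProduct.rid R B
      (LinearMap.lTensor B (Coalgebra.counit (R := R) (A := B)) t)) heq
    simp only [LinearMap.coe_comp, Function.comp_apply, map_sum, LinearMap.lTensor_tmul,
      TensorProduct.rid_tmul] at this
    rw [this]
    rw [show (CoalgebraStruct.comul (R := R) a) = Coalgebra.comul (R := R) a from rfl,
      Coalgebra.lTensor_counit_comul, TensorProduct.rid_tmul, one_smul]
  have h2 : ∑ i ∈ s, Coalgebra.counit (R := R) (HopfAlgebra.antipode (R := R) (l i)) *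
      Coalgebra.counit (R := R) (rt i) = Coalgebra.counit (R := R) a := by
    have := congrArg (fun t => Coalgebra.counit (R := R)
      (LinearMap.mul' R B (LinearMap.rTensor B (HopfAlgebra.antipode (R := R)) t))) heq
    simp only [LinearMap.coe_comp, Function.comp_apply, map_sum, LinearMap.rTensor_tmul,
      LinearMap.mul'_apply, Bialgebra.counit_mul] at this
    rw [this]
    have h3 := HopfAlgebra.mul_antipode_rTensor_comul_apply (R := R) a
    rw [show (CoalgebraStruct.comul (R := R) a) = Coalgebra.comul (R := R) a from rfl, h3,
      Bialgebra.counit_algebraMap]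
  have hR : ∑ i ∈ s, Coalgebra.counit (R := R) (rt i) * Coalgebra.counit (R := R) (l i)
      = Coalgebra.counit (R := R) a := by
    have := congrArg (Coalgebra.counit (R := R) (A := B)) h1
    simpa [map_sum, smul_eq_mul] using this
  calc Coalgebra.counit (R := R) (HopfAlgebra.antipode (R := R) a)
      = ∑ i ∈ s, Coalgebra.counit (R := R) (rt i) *
          Coalgebra.counit (R := R) (HopfAlgebra.antipode (R := R) (l i)) := by
        conv_lhs => rw [← h1]
        simp [map_sum, smul_eq_mul]
    _ = Coalgebra.counit (R := R) a := by
        rw [← h2]; exact Finset.sum_congr rfl fun i _ => mul_comm _ _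

variable {k : Type} [Field k] {I : Type} {H : Type} [Ring H] [HopfAlgebra k H]
variable {A : I → Type} [∀ i, Ring (A i)] [∀ i, HopfAlgebra k (A i)]

lemma letterMap_counit (π : ∀ i, H →ₐc[k] A i) (a : I ⊕ I) (x : H) :
    Coalgebra.counit (R := k) (letterMap π a x) = Coalgebra.counit (R := k) x := by
  cases a with
  | inl i => exact CoalgHomClass.counit_comp_apply (π i) x
  | inr i =>
    exact (CoalgHomClass.counit_comp_apply (π i) (HopfAlgebra.antipode (R := k) x)).trans
      (counit_antipode' (R := k) x)

/-- Iterated counit on a word space. -/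
noncomputable def counitW : ∀ w : List (I ⊕ I), wordSpace k A w →ₗ[k] k
  | [] => LinearMap.id
  | a :: w => (TensorProduct.lid k k).toLinearMap ∘ₗ
      TensorProduct.map (Coalgebra.counit (R := k) (A := A (letterIndex a))) (counitW w)

/-- Expansion of `wordMap` on a cons via a chosen representation of `comul`. -/
lemma wordMap_cons_repr (π : ∀ i, H →ₐc[k] A i) (a : I ⊕ I) (w : List (I ⊕ I)) (x : H)
    {ι : Type} (s : Finset ι) (l rt : ι → H)
    (heq : ∑ i ∈ s, l i ⊗ₜ[k] rt i = Coalgebra.comul x) :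
    wordMap π (a :: w) x = ∑ i ∈ s, letterMap π a (l i) ⊗ₜ[k] wordMap π w (rt i) := by
  show TensorProduct.map (letterMap π a) (wordMap π w) (Coalgebra.comul x) = _
  rw [← heq, map_sum]
  rfl

lemma sum_counit_smul_counit (x : H) {ι : Type} (s : Finset ι) (l rt : ι → H)
    (heq : ∑ i ∈ s, l i ⊗ₜ[k] rt i = Coalgebra.comul x) :
    ∑ i ∈ s, Coalgebra.counit (R := k) (l i) • Coalgebra.counit (R := k) (rt i)
      = Coalgebra.counit (R := k) x := by
  have := congrArg (fun t => TensorProduct.lid k k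
    (TensorProduct.map (Coalgebra.counit (R := k) (A := H))
      (Coalgebra.counit (R := k) (A := H)) t)) heq
  simp only [map_sum, TensorProduct.map_tmul, TensorProduct.lid_tmul] at this
  rw [this]
  have h2 : TensorProduct.map (Coalgebra.counit (R := k) (A := H))
      (Coalgebra.counit (R := k) (A := H)) (Coalgebra.comul x)
      = LinearMap.lTensor k (Coalgebra.counit (R := k) (A := H))
          (LinearMap.rTensor H (Coalgebra.counit (R := k) (A := H)) (Coalgebra.comul x)) := by
    rw [← LinearMap.lTensor_comp_rTensor]; rfl
  rw [h2, Coalgebra.rTensor_counit_comul, LinearMap.lTensor_tmul, TensorProduct.lid_tmul, one_smul]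

lemma sum_counit_smul (x : H) {ι : Type} (s : Finset ι) (l rt : ι → H)
    (heq : ∑ i ∈ s, l i ⊗ₜ[k] rt i = Coalgebra.comul x) :
    ∑ i ∈ s, Coalgebra.counit (R := k) (l i) • rt i = x := by
  have := congrArg (fun t => TensorProduct.lid k H
    (LinearMap.rTensor H (Coalgebra.counit (R := k) (A := H)) t)) heq
  simp only [map_sum, LinearMap.rTensor_tmul, TensorProduct.lid_tmul] at this
  rw [this, Coalgebra.rTensor_counit_comul, TensorProduct.lid_tmul, one_smul]

lemma counitW_wordMap (π : ∀ i, H →ₐc[k] A i) :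
    ∀ (w : List (I ⊕ I)) (x : H),
      counitW (A := A) w (wordMap π w x) = Coalgebra.counit (R := k) x
  | [], _ => rfl
  | a :: w, x => by
    obtain ⟨s, l, rt, heq⟩ := Coalgebra.Repr.arbitrary k x
    rw [wordMap_cons_repr π a w x s l rt heq]
    refine (map_sum (counitW (A := A) (a :: w)) _ _).trans ?_
    have hterm : ∀ i, counitW (A := A) (a :: w) (letterMap π a (l i) ⊗ₜ[k] wordMap π w (rt i))
        = Coalgebra.counit (R := k) (l i) • Coalgebra.counit (R := k) (rt i) := by
      intro i
      show TensorProduct.lid k k (TensorProduct.map _ (counitW w)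
        (letterMap π a (l i) ⊗ₜ[k] wordMap π w (rt i))) = _
      rw [TensorProduct.map_tmul, TensorProduct.lid_tmul, letterMap_counit,
        counitW_wordMap π w (rt i)]
    rw [Finset.sum_congr rfl fun i _ => hterm i]
    exact sum_counit_smul_counit x s l rt heq

/-- Deleting an initial segment of a word, on word spaces. -/
noncomputable def dropW (v : List (I ⊕ I)) :
    ∀ u : List (I ⊕ I), wordSpace k A (u ++ v) →ₗ[k] wordSpace k A v
  | [] => LinearMap.id
  | a :: u => dropW v u ∘ₗ (TensorProduct.lid k (wordSpace k A (u ++ v))).toLinearMap ∘ₗ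
      TensorProduct.map (Coalgebra.counit (R := k) (A := A (letterIndex a))) LinearMap.id

lemma dropW_wordMap (π : ∀ i, H →ₐc[k] A i) (v : List (I ⊕ I)) :
    ∀ (u : List (I ⊕ I)) (x : H),
      dropW (A := A) v u (wordMap π (u ++ v) x) = wordMap π v x
  | [], _ => rfl
  | a :: u, x => by
    obtain ⟨s, l, rt, heq⟩ := Coalgebra.Repr.arbitrary k x
    show dropW (A := A) v (a :: u) (wordMap π (a :: (u ++ v)) x) = wordMap π v x
    rw [wordMap_cons_repr π a (u ++ v) x s l rt heq]
    refine (map_sum (dropW (A := A) v (a :: u)) _ _).trans ?_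
    have hterm : ∀ i, dropW (A := A) v (a :: u)
        (letterMap π a (l i) ⊗ₜ[k] wordMap π (u ++ v) (rt i))
        = Coalgebra.counit (R := k) (l i) • dropW (A := A) v u (wordMap π (u ++ v) (rt i)) := by
      intro i
      show dropW (A := A) v u (TensorProduct.lid k (wordSpace k A (u ++ v))
        (TensorProduct.map _ LinearMap.id
          (letterMap π a (l i) ⊗ₜ[k] wordMap π (u ++ v) (rt i)))) = _
      rw [TensorProduct.map_tmul, TensorProduct.lid_tmul, letterMap_counit, LinearMap.id_coe,
        id_eq, map_smul]
    rw [Finset.sum_congr rfl fun i _ => hterm i]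
    simp only [dropW_wordMap π v u]
    have hsum : ∑ i ∈ s, Coalgebra.counit (R := k) (l i) • wordMap π v (rt i)
        = wordMap π v (∑ i ∈ s, Coalgebra.counit (R := k) (l i) • rt i) := by
      rw [map_sum]
      exact Finset.sum_congr rfl fun i _ => (map_smul _ _ _).symm
    rw [hsum, sum_counit_smul x s l rt heq]

/-- Deleting a final segment of a word, on word spaces. -/
noncomputable def truncW : ∀ (u v : List (I ⊕ I)), wordSpace k A (u ++ v) →ₗ[k] wordSpace k A u
  | [], v => counitW v
  | a :: u, v => TensorProduct.map LinearMap.id (truncW u v)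

lemma truncW_wordMap (π : ∀ i, H →ₐc[k] A i) :
    ∀ (u v : List (I ⊕ I)) (x : H),
      truncW (A := A) u v (wordMap π (u ++ v) x) = wordMap π u x
  | [], v, x => counitW_wordMap π v x
  | a :: u, v, x => by
    obtain ⟨s, l, rt, heq⟩ := Coalgebra.Repr.arbitrary k x
    show truncW (A := A) (a :: u) v (wordMap π (a :: (u ++ v)) x) = wordMap π (a :: u) x
    rw [wordMap_cons_repr π a (u ++ v) x s l rt heq]
    refine (map_sum (truncW (A := A) (a :: u) v) _ _).trans ?_
    rw [wordMap_cons_repr π a u x s l rt heq]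
    refine Finset.sum_congr rfl fun i _ => ?_
    show TensorProduct.map LinearMap.id (truncW u v)
      (letterMap π a (l i) ⊗ₜ[k] wordMap π (u ++ v) (rt i)) = _
    rw [TensorProduct.map_tmul, LinearMap.id_coe, id_eq, truncW_wordMap π u v (rt i)]

end Aux

/-- filter lemma. If the family `π_i : H → A_i` of Hopf algebra maps is
jointly inner faithful, i.e. the kernels of all the word maps `π_𝐢` intersect to zero, then
every finite linearly independent subset `F ⊂ H` stays linearly independent under `π_𝐢` for
a single suitable word `𝐢`. -/
theorem exists_word_linearIndependent
    {k : Type} [Field k] {I : Type} {H : Type} [Ring H] [HopfAlgebra k H]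
    {A : I → Type} [∀ i, Ring (A i)] [∀ i, HopfAlgebra k (A i)]
    (π : ∀ i, H →ₐc[k] A i)
    (hIF : ∀ x : H, (∀ w : List (I ⊕ I), wordMap π w x = 0) → x = 0)
    (F : Finset H) (hF : LinearIndependent k ((↑) : F → H)) :
    ∃ w : List (I ⊕ I), LinearIndependent k (fun f : F => wordMap π w f) := by
  classical
  set V : Submodule k H := Submodule.span k (F : Set H) with hV
  haveI : FiniteDimensional k V := FiniteDimensional.span_finset k F
  set K : List (I ⊕ I) → Submodule k H := fun w => V ⊓ LinearMap.ker (wordMap π w) with hK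
  haveI : ∀ w, FiniteDimensional k (K w) :=
    fun w => Submodule.finiteDimensional_of_le (inf_le_left : K w ≤ V)
  -- kernels decrease along concatenation
  have hmonoL : ∀ u v : List (I ⊕ I), K (u ++ v) ≤ K u := by
    intro u v x hx
    refine ⟨hx.1, ?_⟩
    have hx2 : wordMap π (u ++ v) x = 0 := hx.2
    have := truncW_wordMap π u v x
    rw [hx2, map_zero] at this
    exact this.symm
  have hmonoR : ∀ u v : List (I ⊕ I), K (u ++ v) ≤ K v := by
    intro u v x hx
    refine ⟨hx.1, ?_⟩
    have hx2 : wordMap π (u ++ v) x = 0 := hx.2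
    have := dropW_wordMap π v u x
    rw [hx2, map_zero] at this
    exact this.symm
  -- pick a word of minimal kernel rank
  have hne : (Set.range fun w => Module.finrank k (K w)).Nonempty := ⟨_, ⟨[], rfl⟩⟩
  obtain ⟨w0, hw0⟩ := Nat.sInf_mem hne
  have hmin : ∀ w, Module.finrank k (K w0) ≤ Module.finrank k (K w) := by
    intro w
    exact le_trans (le_of_eq hw0) (Nat.sInf_le ⟨w, rfl⟩)
  have hle : ∀ w, K w0 ≤ K w := by
    intro w
    have h1 : K (w0 ++ w) ≤ K w0 := hmonoL w0 w
    have h2 : K (w0 ++ w) = K w0 :=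
      Submodule.eq_of_le_of_finrank_le h1 (hmin (w0 ++ w))
    rw [← h2]
    exact hmonoR w0 w
  have hbot : K w0 = ⊥ := by
    rw [Submodule.eq_bot_iff]
    intro x hx
    exact hIF x fun w => (hle w hx).2
  refine ⟨w0, ?_⟩
  have hdisj : Disjoint V (LinearMap.ker (wordMap π w0)) := disjoint_iff.mpr hbot
  have := hF.map (f := wordMap π w0) (by rwa [Subtype.range_coe_subtype, Finset.setOf_mem, ← hV])
  exact this
end

section
/- Let π : H → A and π' : K → B be families reduced to the diagonal setup: embed H and K into H ⊗ K via x ↦ x ⊗ 1 and y ↦ 1 ⊗ y. Then the induced Hopf algebra map H * K → (H ⊗ K) * (H ⊗ K) (sending the first free factor via the first embedding into the first copy and the second free factor via the second embedding into the second copy) is an injective Hopf algebra morphism. -/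
open TensorProduct

/-- `(P, ι₁, ι₂)` is a free product (i.e. coproduct) of the `k`-algebras `A` and `B`:
every pair of algebra maps `A → C`, `B → C` factors uniquely through `P`. -/
structure IsAlgebraCoprod (k : Type) [Field k] {A B P : Type}
    [Ring A] [Algebra k A] [Ring B] [Algebra k B] [Ring P] [Algebra k P]
    (ι₁ : A →ₐ[k] P) (ι₂ : B →ₐ[k] P) : Prop where
  existsUnique : ∀ (C : Type) [Ring C] [Algebra k C] (f : A →ₐ[k] C) (g : B →ₐ[k] C),
    ∃! h : P →ₐ[k] C, h.comp ι₁ = f ∧ h.comp ι₂ = g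

section aux

variable {k H K : Type} [Field k] [Ring H] [Ring K] [Bialgebra k H] [Bialgebra k K]

lemma comul_tmul_one (x : H) :
    Coalgebra.comul (R := k) (A := H ⊗[k] K) (x ⊗ₜ 1) =
      TensorProduct.map (Algebra.TensorProduct.includeLeft (S := k) : H →ₐ[k] H ⊗[k] K).toLinearMap
        (Algebra.TensorProduct.includeLeft (S := k) : H →ₐ[k] H ⊗[k] K).toLinearMap
        (Coalgebra.comul x) := by
  obtain ⟨I, l, r, heq⟩ := Coalgebra.Repr.arbitrary k x
  rw [Bialgebra.TensorProduct.comul_eq_algHom_toLinearMap, ← heq]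
  simp only [AlgHom.toLinearMap_apply, AlgHom.coe_comp, AlgEquiv.toAlgHom_eq_coe,
    AlgHom.coe_coe, Function.comp_apply, map_sum, Algebra.TensorProduct.map_tmul,
    Bialgebra.comul_one, Algebra.TensorProduct.one_def, sum_tmul, Bialgebra.comulAlgHom_apply, ← heq,
    Algebra.TensorProduct.tensorTensorTensorComm_tmul, AlgEquiv.coe_toAlgHom, TensorProduct.map_tmul,
    Algebra.TensorProduct.includeLeft_apply, AlgHom.toLinearMap_apply]

lemma counit_tmul_one (x : H) :
    Coalgebra.counit (R := k) (A := H ⊗[k] K) (x ⊗ₜ 1) = Coalgebra.counit (R := k) x := by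
  rw [Bialgebra.TensorProduct.counit_eq_algHom_toLinearMap]
  simp

lemma comul_one_tmul (y : K) :
    Coalgebra.comul (R := k) (A := H ⊗[k] K) ((1 : H) ⊗ₜ y) =
      TensorProduct.map (Algebra.TensorProduct.includeRight : K →ₐ[k] H ⊗[k] K).toLinearMap
        (Algebra.TensorProduct.includeRight : K →ₐ[k] H ⊗[k] K).toLinearMap
        (Coalgebra.comul y) := by
  obtain ⟨I, l, r, heq⟩ := Coalgebra.Repr.arbitrary k y
  rw [Bialgebra.TensorProduct.comul_eq_algHom_toLinearMap, ← heq]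
  simp only [AlgHom.toLinearMap_apply, AlgHom.coe_comp, AlgEquiv.toAlgHom_eq_coe,
    AlgHom.coe_coe, Function.comp_apply, map_sum, Algebra.TensorProduct.map_tmul,
    Bialgebra.comul_one, Algebra.TensorProduct.one_def, tmul_sum, Bialgebra.comulAlgHom_apply, ← heq,
    Algebra.TensorProduct.tensorTensorTensorComm_tmul, AlgEquiv.coe_toAlgHom, TensorProduct.map_tmul,
    Algebra.TensorProduct.includeRight_apply, AlgHom.toLinearMap_apply]

lemma counit_one_tmul (y : K) :
    Coalgebra.counit (R := k) (A := H ⊗[k] K) ((1:H) ⊗ₜ y) = Coalgebra.counit (R := k) y := by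
  rw [Bialgebra.TensorProduct.counit_eq_algHom_toLinearMap]
  simp

end aux

/-- Embed `H` and `K` into the tensor product Hopf algebra `H ⊗ K` via
`x ↦ x ⊗ 1` and `y ↦ 1 ⊗ y`. Then the induced map from the free product `P = H * K`
(coproduct with inclusions `ι₁, ι₂`) to `Q = (H ⊗ K) * (H ⊗ K)` (coproduct with
inclusions `κ₁, κ₂`), sending the first free factor into the first copy and the second
free factor into the second copy, is an injective Hopf algebra morphism (injective, and
compatible with the counits and comultiplications). -/
theorem freeProduct_embeds_freeProduct_of_tensor
    {k : Type} [Field k]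
    {H K P Q : Type} [Ring H] [Ring K] [Ring P] [Ring Q]
    [HopfAlgebra k H] [HopfAlgebra k K] [HopfAlgebra k P] [HopfAlgebra k Q]
    (ι₁ : H →ₐc[k] P) (ι₂ : K →ₐc[k] P)
    (hP : IsAlgebraCoprod k (ι₁ : H →ₐ[k] P) (ι₂ : K →ₐ[k] P))
    (κ₁ κ₂ : (H ⊗[k] K) →ₐc[k] Q)
    (hQ : IsAlgebraCoprod k (κ₁ : (H ⊗[k] K) →ₐ[k] Q) (κ₂ : (H ⊗[k] K) →ₐ[k] Q))
    (θ : P →ₐ[k] Q)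
    (hθ₁ : θ.comp (ι₁ : H →ₐ[k] P) =
      (κ₁ : (H ⊗[k] K) →ₐ[k] Q).comp Algebra.TensorProduct.includeLeft)
    (hθ₂ : θ.comp (ι₂ : K →ₐ[k] P) =
      (κ₂ : (H ⊗[k] K) →ₐ[k] Q).comp Algebra.TensorProduct.includeRight) :
    Function.Injective θ ∧
      Coalgebra.counit (R := k) (A := Q) ∘ₗ θ.toLinearMap = Coalgebra.counit (R := k) (A := P) ∧
      Coalgebra.comul (R := k) (A := Q) ∘ₗ θ.toLinearMap =
        TensorProduct.map θ.toLinearMap θ.toLinearMap ∘ₗ Coalgebra.comul (R := k) (A := P) := by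
  have hθ₁' : ∀ x : H, θ (ι₁ x) = κ₁ (x ⊗ₜ 1) := fun x => DFunLike.congr_fun hθ₁ x
  have hθ₂' : ∀ y : K, θ (ι₂ y) = κ₂ (1 ⊗ₜ y) := fun y => DFunLike.congr_fun hθ₂ y
  refine ⟨?_, ?_, ?_⟩
  · -- injectivity via a retraction
    obtain ⟨ρ, ⟨hρ₁, hρ₂⟩, -⟩ := hQ.existsUnique P
      (((ι₁ : H →ₐ[k] P).comp (Algebra.TensorProduct.rid k k H).toAlgHom).comp
        (Algebra.TensorProduct.map (AlgHom.id k H) (Bialgebra.counitAlgHom k K)))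
      (((ι₂ : K →ₐ[k] P).comp (Algebra.TensorProduct.lid k K).toAlgHom).comp
        (Algebra.TensorProduct.map (Bialgebra.counitAlgHom k H) (AlgHom.id k K)))
    obtain ⟨e, -, hu⟩ := hP.existsUnique P (ι₁ : H →ₐ[k] P) (ι₂ : K →ₐ[k] P)
    have key₁ : ((ρ.comp θ).comp (ι₁ : H →ₐ[k] P)) = (ι₁ : H →ₐ[k] P) := by
      rw [AlgHom.comp_assoc, hθ₁, ← AlgHom.comp_assoc, hρ₁]
      ext x
      simp
    have key₂ : ((ρ.comp θ).comp (ι₂ : K →ₐ[k] P)) = (ι₂ : K →ₐ[k] P) := by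
      rw [AlgHom.comp_assoc, hθ₂, ← AlgHom.comp_assoc, hρ₂]
      ext y
      simp
    have hid : ρ.comp θ = AlgHom.id k P :=
      (hu _ ⟨key₁, key₂⟩).trans
        (hu (AlgHom.id k P) ⟨AlgHom.id_comp _, AlgHom.id_comp _⟩).symm
    exact Function.LeftInverse.injective (g := ρ) fun x => DFunLike.congr_fun hid x
  · -- counit
    obtain ⟨e, -, hu⟩ := hP.existsUnique k (Bialgebra.counitAlgHom k H) (Bialgebra.counitAlgHom k K)
    have h₁ : ((Bialgebra.counitAlgHom k Q).comp θ) = Bialgebra.counitAlgHom k P := by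
      refine (hu _ ⟨?_, ?_⟩).trans (hu _ ⟨?_, ?_⟩).symm
      · ext x
        simp only [AlgHom.coe_comp, Function.comp_apply, Bialgebra.counitAlgHom_apply,
          BialgHom.coe_toAlgHom, hθ₁' x, CoalgHomClass.counit_comp_apply, counit_tmul_one]
      · ext y
        simp only [AlgHom.coe_comp, Function.comp_apply, Bialgebra.counitAlgHom_apply,
          BialgHom.coe_toAlgHom, hθ₂' y, CoalgHomClass.counit_comp_apply, counit_one_tmul]
      · ext x
        simp [BialgHom.coe_toAlgHom, CoalgHomClass.counit_comp_apply]
      · ext y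
        simp [BialgHom.coe_toAlgHom, CoalgHomClass.counit_comp_apply]
    ext p
    exact DFunLike.congr_fun h₁ p
  · -- comul
    obtain ⟨e, -, hu⟩ := hP.existsUnique (Q ⊗[k] Q)
      (((Bialgebra.comulAlgHom k Q).comp θ).comp (ι₁ : H →ₐ[k] P))
      (((Bialgebra.comulAlgHom k Q).comp θ).comp (ι₂ : K →ₐ[k] P))
    have h₁ : (Bialgebra.comulAlgHom k Q).comp θ =
        (Algebra.TensorProduct.map θ θ).comp (Bialgebra.comulAlgHom k P) := by
      refine (hu _ ⟨rfl, rfl⟩).trans (hu _ ⟨?_, ?_⟩).symm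
      · ext x
        obtain ⟨I, l, r, heq⟩ := Coalgebra.Repr.arbitrary k x
        simp only [AlgHom.coe_comp, Function.comp_apply, Bialgebra.comulAlgHom_apply,
          BialgHom.coe_toAlgHom, hθ₁' x]
        rw [← CoalgHomClass.map_comp_comul_apply κ₁, comul_tmul_one,
          ← CoalgHomClass.map_comp_comul_apply ι₁, ← heq]
        simp [hθ₁', Algebra.TensorProduct.one_def]
      · ext y
        obtain ⟨I, l, r, heq⟩ := Coalgebra.Repr.arbitrary k y
        simp only [AlgHom.coe_comp, Function.comp_apply, Bialgebra.comulAlgHom_apply,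
          BialgHom.coe_toAlgHom, hθ₂' y]
        rw [← CoalgHomClass.map_comp_comul_apply κ₂, comul_one_tmul,
          ← CoalgHomClass.map_comp_comul_apply ι₂, ← heq]
        simp [hθ₂', Algebra.TensorProduct.one_def]
    ext p
    have := DFunLike.congr_fun h₁ p
    simp at this ⊢
    exact this
end

section
/- Let H be a Hopf algebra over a field k and π : H → A an algebra morphism. There exists a largest Hopf ideal I of H contained in ker π; equivalently, there is a Hopf algebra quotient H → H/I (the Hopf image of π) through which π factors and which is universal among Hopf quotients of H factoring π. -/
open TensorProduct

/-- A Hopf ideal of a Hopf algebra `L` over `k`: a two-sided ideal `I` with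
`ε(I) = 0`, `Δ(I) ⊆ I ⊗ L + L ⊗ I` and `S(I) ⊆ I`. -/
def IsHopfIdeal {k L : Type} [Field k] [Ring L] [HopfAlgebra k L] (I : Ideal L) : Prop :=
  (∀ x ∈ I, Coalgebra.counit (R := k) x = 0) ∧
  (∀ x ∈ I, Coalgebra.comul (R := k) x ∈
      LinearMap.range ((Submodule.restrictScalars k I).subtype.rTensor L) ⊔
        LinearMap.range ((Submodule.restrictScalars k I).subtype.lTensor L)) ∧
  (∀ x ∈ I, HopfAlgebra.antipode (R := k) x ∈ I)

/-- A family of algebra maps `π_i : L → A_i` out of a Hopf algebra is jointly inner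
faithful if the maps do not simultaneously factor through a proper Hopf quotient of `L`;
equivalently, the only Hopf ideal of `L` contained in all the kernels is zero. -/
def JointlyInnerFaithful (k : Type) [Field k] {L : Type} [Ring L] [HopfAlgebra k L]
    {ι : Type} {A : ι → Type} [∀ i, Ring (A i)] [∀ i, Algebra k (A i)]
    (π : ∀ i, L →ₐ[k] A i) : Prop :=
  ∀ J : Ideal L, IsHopfIdeal (k := k) J → (∀ i, ∀ x ∈ J, π i x = 0) → J = ⊥

lemma hopf_range_mono {k L : Type} [Field k] [Ring L] [HopfAlgebra k L] {J I : Ideal L}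
    (h : J ≤ I) :
    LinearMap.range ((Submodule.restrictScalars k J).subtype.rTensor L) ⊔
        LinearMap.range ((Submodule.restrictScalars k J).subtype.lTensor L) ≤
      LinearMap.range ((Submodule.restrictScalars k I).subtype.rTensor L) ⊔
        LinearMap.range ((Submodule.restrictScalars k I).subtype.lTensor L) := by
  have hs : (Submodule.restrictScalars k J).subtype =
      (Submodule.restrictScalars k I).subtype.comp
        (Submodule.inclusion (show Submodule.restrictScalars k J ≤
          Submodule.restrictScalars k I from h)) := rfl
  apply sup_le_sup
  · rw [hs, LinearMap.rTensor_comp]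
    exact LinearMap.range_comp_le_range _ _
  · rw [hs, LinearMap.lTensor_comp]
    exact LinearMap.range_comp_le_range _ _

lemma isHopfIdeal_sup {k L : Type} [Field k] [Ring L] [HopfAlgebra k L] {J₁ J₂ : Ideal L}
    (h₁ : IsHopfIdeal (k := k) J₁) (h₂ : IsHopfIdeal (k := k) J₂) :
    IsHopfIdeal (k := k) (J₁ ⊔ J₂) := by
  refine ⟨?_, ?_, ?_⟩ <;> intro x hx <;>
    obtain ⟨a, ha, b, hb, rfl⟩ := Submodule.mem_sup.mp hx
  · rw [map_add, h₁.1 a ha, h₂.1 b hb, add_zero]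
  · rw [map_add]
    refine Submodule.add_mem _ ?_ ?_
    · exact hopf_range_mono (le_sup_left : J₁ ≤ J₁ ⊔ J₂) (h₁.2.1 a ha)
    · exact hopf_range_mono (le_sup_right : J₂ ≤ J₁ ⊔ J₂) (h₂.2.1 b hb)
  · rw [map_add]
    exact Submodule.add_mem _ (Ideal.mem_sup_left (h₁.2.2 a ha))
      (Ideal.mem_sup_right (h₂.2.2 b hb))

lemma isHopfIdeal_bot {k L : Type} [Field k] [Ring L] [HopfAlgebra k L] :
    IsHopfIdeal (k := k) (⊥ : Ideal L) := by
  refine ⟨?_, ?_, ?_⟩ <;> intro x hx <;> rw [Ideal.mem_bot] at hx <;> subst hx <;>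
    simp [Submodule.zero_mem]

/-- Hopf image, Banica–Bichon. For any algebra morphism `π : H → A`
out of a Hopf algebra there is a largest Hopf ideal of `H` contained in `ker π`; the
corresponding Hopf quotient `H → H/I` is the Hopf image of `π`, universal among Hopf
quotients of `H` through which `π` factors. -/
theorem exists_largest_hopfIdeal_le_ker
    {k : Type} [Field k] {H : Type} [Ring H] [HopfAlgebra k H]
    {A : Type} [Ring A] [Algebra k A] (π : H →ₐ[k] A) :
    ∃ I : Ideal H, IsHopfIdeal (k := k) I ∧ I ≤ RingHom.ker π.toRingHom ∧
      ∀ J : Ideal H, IsHopfIdeal (k := k) J → J ≤ RingHom.ker π.toRingHom → J ≤ I := by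
  set S : Set (Ideal H) := {J | IsHopfIdeal (k := k) J ∧ J ≤ RingHom.ker π.toRingHom} with hS
  have hbot : (⊥ : Ideal H) ∈ S := ⟨isHopfIdeal_bot, bot_le⟩
  have hdir : DirectedOn (· ≤ ·) S := fun J₁ h₁ J₂ h₂ =>
    ⟨J₁ ⊔ J₂, ⟨isHopfIdeal_sup h₁.1 h₂.1, sup_le h₁.2 h₂.2⟩, le_sup_left, le_sup_right⟩
  refine ⟨sSup S, ?_, sSup_le fun J hJ => hJ.2, fun J hJ hk => le_sSup ⟨hJ, hk⟩⟩
  have hmem : ∀ x : H, x ∈ sSup S → ∃ J ∈ S, x ∈ J := fun x hx =>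
    (Submodule.mem_sSup_of_directed ⟨⊥, hbot⟩ hdir).mp hx
  refine ⟨?_, ?_, ?_⟩ <;> intro x hx <;> obtain ⟨J, hJ, hxJ⟩ := hmem x hx
  · exact hJ.1.1 x hxJ
  · exact hopf_range_mono (le_sSup hJ) (hJ.1.2.1 x hxJ)
  · exact le_sSup hJ (hJ.1.2.2 x hxJ)
end
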